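/- For every even integer n ≥ 2, the only real number t ≥ 0 satisfying t − ⌊t^n⌋ = 1/n is t = 1/n. -/

import Mathlib

/-- For every even integer `n ≥ 2`, the only real `t ≥ 0` satisfying
`t - ⌊t^n⌋ = 1/n` is `t = 1/n`. -/
theorem even_root_floor_equation_unique_nonneg_solution
    (n : ℕ) (hn : 2 ≤ n) (he : Even n) :
    ∀ t : ℝ, 0 ≤ t → (t - (⌊t ^ n⌋ : ℝ) = 1 / n ↔ t = 1 / n) := by
  have hn0 : (0:ℝ) < n := by positivity
  have hnn : n ≠ 0 := by omega
  intro t ht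
  constructor
  · intro h
    set k := ⌊t ^ n⌋ with hk
    have hk0 : 0 ≤ k := Int.floor_nonneg.mpr (by positivity)
    have ht' : t = 1/n + k := by linarith
    by_contra hne
    have hk1 : 1 ≤ k := by
      rcases lt_or_eq_of_le hk0 with h1 | h1
      · omega
      · exfalso; apply hne; rw [ht', ← h1]; simp
    have hkr : (1:ℝ) ≤ (k:ℝ) := by exact_mod_cast hk1
    have hkpos : (0:ℝ) < (k:ℝ) := by linarith
    have hb : 1 + (n:ℝ) * (1/((n:ℝ)*(k:ℝ))) ≤ (1 + 1/((n:ℝ)*(k:ℝ)))^n :=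
      one_add_mul_le_pow (le_trans (by norm_num : (-2:ℝ) ≤ 0) (by positivity)) n
    have hteq : t = (k:ℝ) * (1 + 1/((n:ℝ)*(k:ℝ))) := by
      field_simp [ht']; rw [ht']; field_simp; ring
    have h1 : (k:ℝ)^n * (1 + (n:ℝ) * (1/((n:ℝ)*(k:ℝ)))) ≤ t^n := by
      rw [hteq, mul_pow]
      have : (0:ℝ) ≤ (k:ℝ)^n := by positivity
      nlinarith [hb]
    have h2 : (k:ℝ)^n * (1 + (n:ℝ) * (1/((n:ℝ)*(k:ℝ)))) = (k:ℝ)^(n-1) * ((k:ℝ) + 1) := by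
      have : (k:ℝ)^n = (k:ℝ)^(n-1) * (k:ℝ) := by
        rw [← pow_succ]; congr 1; omega
      field_simp [this]; rw [this]; ring
    have h3 : (1:ℝ) ≤ (k:ℝ)^(n-1) := one_le_pow₀ hkr
    have hfloor : t^n < (k:ℝ) + 1 := Int.lt_floor_add_one _
    nlinarith [h1, h2, h3, hfloor]
  · intro h
    have h1 : (0:ℝ) ≤ (1/n:ℝ)^n := by positivity
    have h2 : (1/n:ℝ)^n < 1 := by
      apply pow_lt_one₀ (by positivity)
      · rw [div_lt_one hn0]; norm_num; omega
      · omega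
    have hf : ⌊t^n⌋ = 0 := by
      rw [h]; exact Int.floor_eq_zero_iff.mpr ⟨h1, h2⟩
    rw [hf, h]; simp
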